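/- Let f be a modulus function with lim_{t→∞} f(t)/t = β > 0. Then AC_θ(f) ⊆ AC_θ: if there exists an integer n such that (1/h_r) Σ_{m∈I_r} f(|x_m − x_{⟨m,n⟩}|) → 0, then (1/h_r) Σ_{m∈I_r} |x_m − x_{⟨m,n⟩}| → 0. (Key step: β > 0 together with subadditivity and monotonicity of f implies f(t) ≥ β t for all t ≥ 0.) -/
import Mathlib


open Filter Finset

/-- Membership in the lacunary arithmetic convergence space `AC_θ`,
with lacunary sequence given by `k` (blocks `I_r = (k r, k (r+1)]`,
`h_r = k (r+1) - k r`) and witness integer `n`. -/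
def ACtheta (k : ℕ → ℕ) (n : ℕ) (x : ℕ → ℝ) : Prop :=
  Tendsto (fun r => (1 / ((k (r + 1) - k r : ℕ) : ℝ)) *
    ∑ m ∈ Finset.Ioc (k r) (k (r + 1)), |x m - x (Nat.gcd m n)|) atTop (nhds 0)

/-- Membership in the strongly Cesàro arithmetic convergence space `AC_{σ₁}`
with witness integer `n`. -/
def ACsigma (n : ℕ) (x : ℕ → ℝ) : Prop :=
  Tendsto (fun t : ℕ => (1 / (t : ℝ)) *
    ∑ m ∈ Finset.Icc 1 t, |x m - x (Nat.gcd m n)|) atTop (nhds 0)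
/-- A modulus function `f : [0,∞) → [0,∞)`. -/
structure IsModulus (f : ℝ → ℝ) : Prop where
  nonneg : ∀ x, 0 ≤ x → 0 ≤ f x
  eq_zero_iff : ∀ x, 0 ≤ x → (f x = 0 ↔ x = 0)
  subadd : ∀ x y, 0 ≤ x → 0 ≤ y → f (x + y) ≤ f x + f y
  mono : ∀ x y, 0 ≤ x → x ≤ y → f x ≤ f y
  right_cont : ContinuousWithinAt f (Set.Ici 0) 0

/-- Membership in `AC_θ(f)` with witness integer `n`. -/
def ACthetaF (f : ℝ → ℝ) (k : ℕ → ℕ) (n : ℕ) (x : ℕ → ℝ) : Prop :=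
  Filter.Tendsto (fun r => (1 / ((k (r + 1) - k r : ℕ) : ℝ)) *
    ∑ m ∈ Finset.Ioc (k r) (k (r + 1)), f |x m - x (Nat.gcd m n)|)
    Filter.atTop (nhds 0)

lemma modulus_nsmul (f : ℝ → ℝ) (hf : IsModulus f) (t : ℝ) (ht : 0 ≤ t) :
    ∀ N : ℕ, f (N * t) ≤ N * f t := by
  intro N
  induction N with
  | zero =>
      simp only [Nat.cast_zero, zero_mul]
      exact le_of_eq ((hf.eq_zero_iff 0 le_rfl).mpr rfl)
  | succ N ih =>
      have h1 : ((N : ℝ) + 1) * t = N * t + t := by ring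
      have h2 : f (N * t + t) ≤ f (N * t) + f t :=
        hf.subadd _ _ (by positivity) ht
      push_cast
      rw [h1]
      calc f (N * t + t) ≤ f (N * t) + f t := h2
        _ ≤ N * f t + f t := by linarith
        _ = ((N : ℝ) + 1) * f t := by ring

lemma modulus_lower (f : ℝ → ℝ) (hf : IsModulus f) (β : ℝ)
    (hlim : Tendsto (fun t : ℝ => f t / t) atTop (nhds β))
    (t : ℝ) (ht : 0 ≤ t) : β * t ≤ f t := by
  rcases eq_or_lt_of_le ht with h | h
  · rw [← h, mul_zero]
    exact le_of_eq ((hf.eq_zero_iff 0 le_rfl).mpr rfl).symm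
  · -- t > 0
    have hN : Tendsto (fun N : ℕ => (N : ℝ) * t) atTop atTop :=
      (tendsto_natCast_atTop_atTop).atTop_mul_const h
    have h2 : Tendsto (fun N : ℕ => f ((N : ℝ) * t) / ((N : ℝ) * t)) atTop (nhds β) :=
      hlim.comp hN
    have hle : β ≤ f t / t := by
      refine le_of_tendsto h2 ?_
      filter_upwards [eventually_ge_atTop 1] with N hN1
      have hNt : (0 : ℝ) < (N : ℝ) * t := by
        have : (1 : ℝ) ≤ (N : ℝ) := by exact_mod_cast hN1
        positivity
      have := modulus_nsmul f hf t ht N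
      rw [div_le_div_iff₀ hNt h]
      calc f ((N : ℝ) * t) * t ≤ ((N : ℝ) * f t) * t := by nlinarith
        _ = f t * ((N : ℝ) * t) := by ring
    calc β * t ≤ (f t / t) * t := by nlinarith
      _ = f t := by field_simp

/-- if `lim f(t)/t = β > 0` then `AC_θ(f) ⊆ AC_θ`. -/
theorem ACthetaF_subset_ACtheta (f : ℝ → ℝ) (hf : IsModulus f)
    (β : ℝ) (hβ : 0 < β)
    (hlim : Tendsto (fun t : ℝ => f t / t) atTop (nhds β))
    (k : ℕ → ℕ) (hk : StrictMono k)
    (hh : Tendsto (fun r => (k (r + 1) - k r : ℕ)) atTop atTop)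
    (n : ℕ) (x : ℕ → ℝ) (hx : ACthetaF f k n x) :
    ACtheta k n x := by
  unfold ACtheta
  have key : Tendsto (fun r => β⁻¹ * ((1 / ((k (r + 1) - k r : ℕ) : ℝ)) *
      ∑ m ∈ Finset.Ioc (k r) (k (r + 1)), f |x m - x (Nat.gcd m n)|)) atTop (nhds 0) := by
    simpa using hx.const_mul β⁻¹
  refine squeeze_zero (fun r => ?_) (fun r => ?_) key
  · apply mul_nonneg (by positivity)
    exact Finset.sum_nonneg fun m _ => abs_nonneg _
  · rw [← mul_assoc, mul_comm β⁻¹, mul_assoc]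
    apply mul_le_mul_of_nonneg_left _ (by positivity)
    rw [Finset.mul_sum]
    apply Finset.sum_le_sum
    intro m _
    have := modulus_lower f hf β hlim |x m - x (Nat.gcd m n)| (abs_nonneg _)
    rw [inv_mul_eq_div, le_div_iff₀ hβ, mul_comm]
    exact this
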